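/- Let A, B, C, D, q ∈ ℂ with A ≠ 0, B ≠ 0, q ≠ 0 and |q| ≠ 1. Let f be meromorphic on ℂ and satisfy f'(z) = A·f(qz) + B·f(z)^2 + C·f(z) + D at every point z at which f is analytic at both z and qz. If f has a pole of order t ≥ 2 at some point z₀ ≠ 0, then for every n ≥ 1, f has a pole of order 2^n·t at the point q^n·z₀. -/

import Mathlib

open Filter Topology

private lemma analyticAt_deriv' {g : ℂ → ℂ} {w : ℂ} (hg : AnalyticAt ℂ g w) :
    AnalyticAt ℂ (deriv g) w := by
  have h1 : AnalyticAt ℂ (fderiv ℂ g) w := hg.fderiv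
  have h2 : AnalyticAt ℂ (fun L : ℂ →L[ℂ] ℂ => L 1) (fderiv ℂ g w) :=
    (ContinuousLinearMap.apply ℂ ℂ (1 : ℂ)).analyticAt _
  exact (h2.comp h1).congr (Filter.Eventually.of_forall fun x => rfl)

private lemma key_step (A B C D q : ℂ) (hA : A ≠ 0) (hB : B ≠ 0) (hq0 : q ≠ 0)
    (f : ℂ → ℂ) (hf : ∀ z : ℂ, MeromorphicAt f z)
    (heq : ∀ z : ℂ, AnalyticAt ℂ f z → AnalyticAt ℂ f (q * z) →
      deriv f z = A * f (q * z) + B * (f z) ^ 2 + C * f z + D)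
    (w : ℂ) (m : ℕ) (hm : 2 ≤ m)
    (hpole : meromorphicOrderAt f w = (-(m : ℤ) : ℤ)) :
    meromorphicOrderAt f (q * w) = (-((2 * m : ℕ) : ℤ) : ℤ) := by
  obtain ⟨k, rfl⟩ : ∃ k, m = k + 2 := ⟨m - 2, by omega⟩
  set m : ℕ := k + 2 with hmdef
  -- local representation of f at the pole w
  obtain ⟨g, hg, hgw, hrep⟩ := (meromorphicOrderAt_eq_int_iff (hf w)).mp hpole
  have hrep' : ∀ᶠ z in 𝓝[≠] w, f z = g z / (z - w) ^ m := by
    filter_upwards [hrep, self_mem_nhdsWithin] with z h1 h2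
    have hzw : z ≠ w := h2
    rw [h1, smul_eq_mul, zpow_neg, zpow_natCast, inv_mul_eq_div]
  set F : ℂ → ℂ := fun z => g z / (z - w) ^ m with hF
  have hne : ∀ᶠ z in 𝓝[≠] w, z ≠ w := self_mem_nhdsWithin
  -- f is analytic on a punctured neighbourhood, and so is z ↦ f (q z)
  have hana : ∀ᶠ z in 𝓝[≠] w, AnalyticAt ℂ f z := (hf w).eventually_analyticAt
  have hmap : Tendsto (fun z : ℂ => q * z) (𝓝[≠] w) (𝓝[≠] (q * w)) := by
    rw [tendsto_nhdsWithin_iff]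
    constructor
    · exact ((continuous_mul_left q).continuousAt).mono_left nhdsWithin_le_nhds
    · filter_upwards [hne] with z hz
      exact fun h => hz (mul_left_cancel₀ hq0 h)
  have hanaq : ∀ᶠ z in 𝓝[≠] w, AnalyticAt ℂ f (q * z) :=
    hmap.eventually (hf (q * w)).eventually_analyticAt
  have heq' : ∀ᶠ z in 𝓝[≠] w, A * f (q * z) = deriv f z - B * f z ^ 2 - C * f z - D := by
    filter_upwards [hana, hanaq] with z h1 h2
    rw [heq z h1 h2]; ring
  -- deriv f = deriv F on a punctured neighbourhood
  have hev2 : ∀ᶠ z in 𝓝[≠] w, f =ᶠ[𝓝 z] F := by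
    have h0 : ∀ᶠ z in 𝓝 w, z ≠ w → f z = F z := by
      have := hrep'
      rw [eventually_nhdsWithin_iff] at this
      filter_upwards [this] with z hz hzw
      exact hz hzw
    have h1 := h0.eventually_nhds
    rw [eventually_nhdsWithin_iff]
    filter_upwards [h1] with z hz hzw
    have hzw' : z ≠ w := hzw
    filter_upwards [hz, eventually_ne_nhds hzw'] with y hy hyw
    exact hy hyw
  have hderiv : ∀ᶠ z in 𝓝[≠] w, deriv f z = deriv F z :=
    hev2.mono fun z h => h.deriv_eq
  have hgana : ∀ᶠ z in 𝓝[≠] w, AnalyticAt ℂ g z :=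
    hg.eventually_analyticAt.filter_mono nhdsWithin_le_nhds
  have hFderiv : ∀ᶠ z in 𝓝[≠] w, deriv F z =
      (deriv g z * (z - w) ^ m - g z * ((m : ℂ) * (z - w) ^ (m - 1) * 1)) / ((z - w) ^ m) ^ 2 := by
    filter_upwards [hne, hgana] with z hzw hgz
    have hd : HasDerivAt (fun z : ℂ => (z - w) ^ m) ((m : ℂ) * (z - w) ^ (m - 1) * 1) z :=
      ((hasDerivAt_id z).sub_const w).pow m
    rw [hF]
    rw [deriv_fun_div hgz.differentiableAt hd.differentiableAt
      (pow_ne_zero m (sub_ne_zero.mpr hzw)), hd.deriv]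
  -- the auxiliary analytic function h
  set h : ℂ → ℂ := fun z => deriv g z * (z - w) ^ m - (m : ℂ) * g z * (z - w) ^ (m - 1)
      - B * g z ^ 2 - C * (z - w) ^ m * g z - D * (z - w) ^ (2 * m) with hh
  have keyeq : ∀ᶠ z in 𝓝[≠] w, f (q * z) = (h z / A) / (z - w) ^ (2 * m) := by
    filter_upwards [heq', hrep', hderiv, hFderiv, hne] with z e1 e2 e3 e4 hzw
    have hzw' : z - w ≠ 0 := sub_ne_zero.mpr hzw
    have e5 : f (q * z) = (deriv f z - B * f z ^ 2 - C * f z - D) / A := by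
      rw [eq_div_iff hA]; linear_combination e1
    rw [e5, e3, e4, e2]
    simp only [hh, hmdef]
    field_simp
    ring
  -- h is analytic at w and nonzero there
  have hsub : AnalyticAt ℂ (fun z : ℂ => z - w) w := analyticAt_id.sub analyticAt_const
  have hderivg : AnalyticAt ℂ (deriv g) w := analyticAt_deriv' hg
  have hhana : AnalyticAt ℂ h w := by
    apply AnalyticAt.sub
    apply AnalyticAt.sub
    apply AnalyticAt.sub
    apply AnalyticAt.sub
    · exact hderivg.mul (hsub.pow m)
    · exact (analyticAt_const.mul hg).mul (hsub.pow (m - 1))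
    · exact analyticAt_const.mul (hg.pow 2)
    · exact (analyticAt_const.mul (hsub.pow m)).mul hg
    · exact analyticAt_const.mul (hsub.pow (2 * m))
  have hhw : h w = -(B * g w ^ 2) := by
    simp only [hh, hmdef]
    simp [sub_self]
  have hhw0 : h w ≠ 0 := by
    rw [hhw]
    exact neg_ne_zero.mpr (mul_ne_zero hB (pow_ne_zero 2 hgw))
  -- transfer back to a representation of f near q w
  have hmap' : Tendsto (fun u : ℂ => q⁻¹ * u) (𝓝[≠] (q * w)) (𝓝[≠] w) := by
    rw [tendsto_nhdsWithin_iff]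
    constructor
    · have hc : Tendsto (fun u : ℂ => q⁻¹ * u) (𝓝 (q * w)) (𝓝 (q⁻¹ * (q * w))) :=
        (continuous_mul_left q⁻¹).continuousAt
      rw [inv_mul_cancel_left₀ hq0] at hc
      exact hc.mono_left nhdsWithin_le_nhds
    · filter_upwards [self_mem_nhdsWithin] with u hu
      intro hcon
      exact hu (show u = q * w by have hc : q⁻¹ * u = w := hcon; rw [← hc, mul_inv_cancel_left₀ hq0])
  set kfun : ℂ → ℂ := fun u => q ^ (2 * m) * h (q⁻¹ * u) / A with hkfun
  have hkana : AnalyticAt ℂ kfun (q * w) := by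
    have hcomp : AnalyticAt ℂ (fun u : ℂ => h (q⁻¹ * u)) (q * w) := by
      apply AnalyticAt.comp_of_eq hhana (analyticAt_const.mul analyticAt_id)
      simp only [Pi.mul_apply, id_eq, one_div, inv_mul_cancel_left₀ hq0]
    exact (analyticAt_const.mul hcomp).div analyticAt_const hA
  have hkval : kfun (q * w) ≠ 0 := by
    have : q⁻¹ * (q * w) = w := by field_simp
    rw [hkfun]
    simp only [this]
    exact div_ne_zero (mul_ne_zero (pow_ne_zero _ hq0) hhw0) hA
  rw [meromorphicOrderAt_eq_int_iff (hf (q * w))]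
  refine ⟨kfun, hkana, hkval, ?_⟩
  have := hmap'.eventually keyeq
  filter_upwards [this, self_mem_nhdsWithin] with u hu huw
  have huw' : u - q * w ≠ 0 := sub_ne_zero.mpr huw
  have h1 : q * (q⁻¹ * u) = u := by field_simp
  rw [h1] at hu
  rw [hu, smul_eq_mul, zpow_neg, zpow_natCast, hkfun]
  have h2 : q⁻¹ * u - w = (u - q * w) / q := by field_simp
  rw [h2]
  field_simp
  rw [mul_assoc, div_pow, div_mul_cancel₀ _ (pow_ne_zero _ hq0)]

/-- For `A ≠ 0`, `B ≠ 0`, `q ≠ 0`, `|q| ≠ 1`: if a meromorphic solution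
of `f'(z) = A f(qz) + B f(z)² + C f(z) + D` has a pole of order `t ≥ 2` at `z₀ ≠ 0`,
then for every `n ≥ 1` it has a pole of order `2ⁿ t` at `qⁿ z₀`. -/
theorem stmt15 (A B C D q : ℂ) (hA : A ≠ 0) (hB : B ≠ 0) (hq0 : q ≠ 0)
    (hq1 : ‖q‖ ≠ 1)
    (f : ℂ → ℂ) (hf : ∀ z : ℂ, MeromorphicAt f z)
    (heq : ∀ z : ℂ, AnalyticAt ℂ f z → AnalyticAt ℂ f (q * z) →
      deriv f z = A * f (q * z) + B * (f z) ^ 2 + C * f z + D)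
    (z₀ : ℂ) (hz₀ : z₀ ≠ 0) (t : ℕ) (ht : 2 ≤ t)
    (hpole : meromorphicOrderAt f z₀ = (-(t : ℤ) : ℤ)) :
    ∀ n : ℕ, 1 ≤ n → meromorphicOrderAt f (q ^ n * z₀) = (-(2 ^ n * t : ℤ) : ℤ) := by
  have main : ∀ n : ℕ, meromorphicOrderAt f (q ^ n * z₀) = (-((2 ^ n * t : ℕ) : ℤ) : ℤ) := by
    intro n
    induction n with
    | zero =>
      have e : q ^ 0 * z₀ = z₀ := by ring
      rw [e]
      simpa using hpole
    | succ n ih =>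
      have hm : 2 ≤ 2 ^ n * t := le_trans ht (Nat.le_mul_of_pos_left t (pow_pos (by norm_num) n))
      have := key_step A B C D q hA hB hq0 f hf heq (q ^ n * z₀) (2 ^ n * t) hm ih
      have e : q * (q ^ n * z₀) = q ^ (n + 1) * z₀ := by ring
      have e2 : (2 : ℕ) * (2 ^ n * t) = 2 ^ (n + 1) * t := by ring
      rw [e, e2] at this
      exact this
  intro n _
  have := main n
  rw [this]
  push_cast
  ring_nf
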